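/- Let (H,E) be an orthogonal semigroup of order m and rank d satisfying the CM condition, with |Ap(H,E)| = m, and suppose that for each 1 ≤ i ≤ d the projection H_i = {σ_i(h) : h ∈ H} ⊆ ℕ is a numerical semigroup (i.e., gcd of its elements is 1; note m ∈ H_i). Suppose type H = 2 and H is an AG semigroup of type two; concretely, Soc(H,E) = {u, v} with u ≠ v, there exists an index i with v + m·e_i = 2u, and w ≤_H v for every w ∈ Ap(H,E)\{u}. Then for every 1 ≤ j ≤ d the numerical semigroup H_j is an AG semigroup of type at most two, i.e., H_j is symmetric or pseudo-symmetric: either |Soc(H_j,{m})| = 1, or Soc(H_j,{m}) = {s, z} with s ≠ z and 2s = z + m. -/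

import Mathlib

open scoped Classical

namespace AGpaper

/-- An orthogonal semigroup of order `m` in `ℕ^d`. -/
def IsOrthogonal (d m : ℕ) (H : AddSubmonoid (Fin d → ℤ)) : Prop :=
  H.FG ∧
  (∀ x ∈ H, ∀ i, 0 ≤ x i) ∧
  (∀ i : Fin d, Pi.single i (m : ℤ) ∈ H) ∧
  (∃ n : ℕ, 0 < n ∧ ∀ x ∈ H, ∀ i, (m : ℤ) ∣ (n : ℤ) * x i) ∧
  (∀ i : Fin d, ∀ m' : ℕ, 0 < m' → m' < m → Pi.single i (m' : ℤ) ∉ H)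

/-- Membership in `ℤE = ℤ(m e₁) + ⋯ + ℤ(m e_d)`. -/
def inZE (d m : ℕ) (x : Fin d → ℤ) : Prop := ∀ i : Fin d, (m : ℤ) ∣ x i

/-- The Apéry set of an orthogonal semigroup w.r.t. its extreme rays `m eᵢ`. -/
def apery (d m : ℕ) (H : AddSubmonoid (Fin d → ℤ)) : Set (Fin d → ℤ) :=
  {x | x ∈ H ∧ ∀ i : Fin d, x - Pi.single i (m : ℤ) ∉ H}

/-- The socle: maximal elements of the Apéry set with respect to `≤_H`. -/
def soc (d m : ℕ) (H : AddSubmonoid (Fin d → ℤ)) : Set (Fin d → ℤ) :=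
  {x | x ∈ apery d m H ∧ ∀ y ∈ apery d m H, y - x ∈ H → x = y}

/-- The CM condition: every element of `G(H)` is uniquely `a + z`, `a ∈ Ap(H,E)`, `z ∈ ℤE`. -/
def CMcond (d m : ℕ) (H : AddSubmonoid (Fin d → ℤ)) : Prop :=
  ∀ g ∈ AddSubgroup.closure (H : Set (Fin d → ℤ)),
    ∃! a, a ∈ apery d m H ∧ inZE d m (g - a)

/-- The `j`-th coordinate projection `H_j = {σ_j(h) : h ∈ H}` of `H`, a submonoid of `ℤ`. -/
def projSg {d : ℕ} (H : AddSubmonoid (Fin d → ℤ)) (j : Fin d) : AddSubmonoid ℤ :=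
  AddSubmonoid.map (Pi.evalAddMonoidHom (fun _ : Fin d => ℤ) j) H

/-- The Apéry set `Ap(N, {m})` of a numerical semigroup `N` w.r.t. `m ∈ N`. -/
def aperyZ (m : ℕ) (N : AddSubmonoid ℤ) : Set ℤ := {x | x ∈ N ∧ x - (m : ℤ) ∉ N}

/-- The socle `Soc(N, {m})`: maximal elements of `Ap(N, {m})` w.r.t. `≤_N`. -/
def socZ (m : ℕ) (N : AddSubmonoid ℤ) : Set ℤ :=
  {x | x ∈ aperyZ m N ∧ ∀ y ∈ aperyZ m N, y - x ∈ N → x = y}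

/-- Let `(H,E)` be a Cohen–Macaulay orthogonal semigroup of order `m`
with `|Ap(H,E)| = m` whose coordinate projections `H_j` are numerical semigroups.  If `H`
is an AG semigroup of type two — `Soc(H,E) = {u,v}`, `u ≠ v`, `v + m eᵢ = 2u` for some
`i`, and `w ≤_H v` for every `w ∈ Ap(H,E)\{u}` — then every `H_j` is symmetric or
pseudo-symmetric: either `|Soc(H_j,{m})| = 1`, or `Soc(H_j,{m}) = {s,z}` with `s ≠ z`
and `2s = z + m`. -/
private lemma exists_sub_of_mem_closure {N : AddSubmonoid ℤ} {g : ℤ}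
    (hg : g ∈ AddSubgroup.closure (N : Set ℤ)) : ∃ a ∈ N, ∃ b ∈ N, g = a - b := by
  induction hg using AddSubgroup.closure_induction with
  | mem x hx => exact ⟨x, hx, 0, N.zero_mem, by ring⟩
  | zero => exact ⟨0, N.zero_mem, 0, N.zero_mem, by ring⟩
  | add x y hx hy ihx ihy =>
      obtain ⟨a, ha, b, hb, rfl⟩ := ihx
      obtain ⟨c, hc, e, he, rfl⟩ := ihy
      exact ⟨a + c, N.add_mem ha hc, b + e, N.add_mem hb he, by ring⟩
  | neg x hx ihx =>
      obtain ⟨a, ha, b, hb, rfl⟩ := ihx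
      exact ⟨b, hb, a, ha, by ring⟩

private lemma aperyZ_card {m : ℕ} (hm : 1 ≤ m) {N : AddSubmonoid ℤ}
    (hN0 : ∀ x ∈ N, 0 ≤ x) (hNm : (m : ℤ) ∈ N)
    (hcl : AddSubgroup.closure (N : Set ℤ) = ⊤) :
    (aperyZ m N).Finite ∧ (aperyZ m N).ncard = m := by
  haveI : NeZero m := ⟨by omega⟩
  set f : ℤ → ZMod m := fun x => (x : ZMod m) with hf
  have hinj : Set.InjOn f (aperyZ m N) := by
    intro x hx y hy hxy
    have hdvd : (m : ℤ) ∣ y - x := Int.ModEq.dvd ((ZMod.intCast_eq_intCast_iff _ _ _).1 hxy)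
    obtain ⟨k, hk⟩ := hdvd
    rcases lt_trichotomy k 0 with hk0 | hk0 | hk0
    · exfalso
      apply hx.2
      have h1 : (-k - 1).toNat • (m : ℤ) ∈ N := N.nsmul_mem hNm _
      have h2 : x - (m : ℤ) = y + (-k - 1).toNat • (m : ℤ) := by
        rw [nsmul_eq_mul]
        have h3 : (((-k - 1).toNat : ℤ)) = -k - 1 := by omega
        rw [h3]; linarith
      rw [h2]; exact N.add_mem hy.1 h1
    · subst hk0; linarith
    · exfalso
      apply hy.2
      have h1 : (k - 1).toNat • (m : ℤ) ∈ N := N.nsmul_mem hNm _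
      have h2 : y - (m : ℤ) = x + (k - 1).toNat • (m : ℤ) := by
        rw [nsmul_eq_mul]
        have h3 : (((k - 1).toNat : ℤ)) = k - 1 := by omega
        rw [h3]; linarith
      rw [h2]; exact N.add_mem hx.1 h1
  have hsurj : f '' (aperyZ m N) = Set.univ := by
    apply Set.eq_univ_of_forall
    intro c
    have h1 : (1 : ℤ) ∈ AddSubgroup.closure (N : Set ℤ) := by rw [hcl]; trivial
    obtain ⟨a, ha, b, hb, hab⟩ := exists_sub_of_mem_closure h1
    set g : ℤ := a + (m - 1) • b with hg
    have hgN : g ∈ N := N.add_mem ha (N.nsmul_mem hb _)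
    have hg1 : ((g : ℤ) : ZMod m) = 1 := by
      have h2 : g = (m : ℤ) * b + 1 := by
        rw [hg, nsmul_eq_mul, Nat.cast_sub hm]
        push_cast
        linarith
      rw [h2]
      push_cast
      simp
    have hex : ∃ x : ℕ, ((x : ℤ) ∈ N) ∧ (((x : ℕ) : ZMod m) = c) := by
      refine ⟨(c.val • g).toNat, ?_, ?_⟩
      · have hmem : c.val • g ∈ N := N.nsmul_mem hgN _
        have := hN0 _ hmem
        rwa [Int.toNat_of_nonneg this]
      · have hmem : c.val • g ∈ N := N.nsmul_mem hgN _
        have hnn := hN0 _ hmem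
        have h4 : (((c.val • g).toNat : ℕ) : ZMod m) = (((c.val • g : ℤ)) : ZMod m) := by
          rw [← Int.cast_natCast, Int.toNat_of_nonneg hnn]
        rw [h4]
        have : ((c.val • g : ℤ) : ZMod m) = (c.val : ZMod m) * ((g : ℤ) : ZMod m) := by
          rw [nsmul_eq_mul]; push_cast; ring
        rw [this, hg1, mul_one]
        exact ZMod.natCast_rightInverse c
    set x0 := Nat.find hex with hx0def
    have hx0 := Nat.find_spec hex
    have hx0ap : (x0 : ℤ) ∈ aperyZ m N := by
      refine ⟨hx0.1, fun hc => ?_⟩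
      have hnn : (0 : ℤ) ≤ (x0 : ℤ) - m := hN0 _ hc
      have hyeq : (((x0 - m : ℕ)) : ℤ) = (x0 : ℤ) - m := by omega
      have hymem : (((x0 - m : ℕ)) : ℤ) ∈ N := by rw [hyeq]; exact hc
      have hycast : (((x0 - m : ℕ)) : ZMod m) = c := by
        have h5 : (((x0 - m : ℕ)) : ZMod m) = ((((x0 - m : ℕ) : ℤ)) : ZMod m) := by push_cast; ring
        rw [h5, hyeq]
        push_cast
        simp [hx0.2]
        exact hx0.2
      have hlt : x0 - m < x0 := by omega
      exact Nat.find_min hex hlt ⟨hymem, hycast⟩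
    refine ⟨(x0 : ℤ), hx0ap, ?_⟩
    show ((x0 : ℤ) : ZMod m) = c
    push_cast
    exact hx0.2
  have hfin : (aperyZ m N).Finite := by
    have : (f '' (aperyZ m N)).Finite := Set.finite_univ.subset (by rw [hsurj])
    exact Set.Finite.of_finite_image this hinj
  refine ⟨hfin, ?_⟩
  have h6 : (f '' (aperyZ m N)).ncard = (aperyZ m N).ncard := Set.ncard_image_of_injOn hinj
  rw [hsurj] at h6
  rw [← h6, Set.ncard_univ, Nat.card_eq_fintype_card, ZMod.card]


theorem projection_AG {d m : ℕ} (hd : 1 ≤ d) (hm : 1 ≤ m)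
    (H : AddSubmonoid (Fin d → ℤ)) (horth : IsOrthogonal d m H)
    (hCM : CMcond d m H)
    (hap : (apery d m H).ncard = m)
    (hnum : ∀ j : Fin d, AddSubgroup.closure ((projSg H j : Set ℤ)) = ⊤)
    (u v : Fin d → ℤ) (huv : u ≠ v)
    (hsoc : soc d m H = {u, v})
    (hAG : ∃ i : Fin d, v + Pi.single i (m : ℤ) = u + u)
    (hmax : ∀ w ∈ apery d m H, w ≠ u → v - w ∈ H) :
    ∀ j : Fin d,
      (socZ m (projSg H j)).ncard = 1 ∨
      ∃ s z : ℤ, s ≠ z ∧ socZ m (projSg H j) = {s, z} ∧ 2 * s = z + (m : ℤ) := by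
  intro j
  have hnonneg := horth.2.1
  set N := projSg H j with hNdef
  have hN0 : ∀ x ∈ N, 0 ≤ x := by
    rintro x ⟨h, hh, rfl⟩
    exact hnonneg h hh j
  have hNm : (m : ℤ) ∈ N := ⟨Pi.single j (m : ℤ), horth.2.2.1 j, by simp [Pi.evalAddMonoidHom]⟩
  obtain ⟨hApNfin, hApNcard⟩ := aperyZ_card hm hN0 hNm (hnum j)
  have hapfin : (apery d m H).Finite := by
    by_contra hc
    have h0 : (apery d m H).ncard = 0 := Set.Infinite.ncard hc
    omega
  -- every element of H decomposes as apery element plus multiples of m in coordinate j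
  have decomp : ∀ n : ℕ, ∀ h ∈ H, (∑ i, (h i).toNat) = n →
      ∃ a ∈ apery d m H, ∃ t : ℕ, h j = a j + m * t := by
    intro n
    induction n using Nat.strong_induction_on with
    | _ n ih =>
      intro h hh hsum
      by_cases hA : h ∈ apery d m H
      · exact ⟨h, hA, 0, by push_cast; ring⟩
      · have hex : ∃ i, h - Pi.single i (m : ℤ) ∈ H := by
          by_contra hcon
          push_neg at hcon
          exact hA ⟨hh, hcon⟩
        obtain ⟨i, hi⟩ := hex
        have hval : ∀ k, (h - Pi.single i (m : ℤ) : Fin d → ℤ) k = h k - (if k = i then (m : ℤ) else 0) := by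
          intro k
          simp [Pi.single_apply]
        have hge : 0 ≤ h i - m := by
          have := hnonneg _ hi i
          rw [hval i] at this
          simpa using this
        have hlt : (∑ k, ((h - Pi.single i (m : ℤ) : Fin d → ℤ) k).toNat) < n := by
          rw [← hsum]
          apply Finset.sum_lt_sum
          · intro k _
            rw [hval k]
            rcases eq_or_ne k i with hki | hki
            · rw [if_pos hki]; omega
            · rw [if_neg hki]; omega
          · refine ⟨i, Finset.mem_univ i, ?_⟩
            rw [hval i, if_pos rfl]
            omega
        obtain ⟨a, ha, t, ht⟩ := ih _ hlt _ hi rfl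
        rw [hval j] at ht
        by_cases hij : j = i
        · refine ⟨a, ha, t + 1, ?_⟩
          rw [if_pos hij] at ht
          push_cast
          linarith
        · refine ⟨a, ha, t, ?_⟩
          rw [if_neg hij] at ht
          linarith
  -- Ap(N, m) is the image of Ap(H, E) under the j-th projection
  have himsub : aperyZ m N ⊆ (fun x => x j) '' apery d m H := by
    rintro n ⟨hnN, hnap⟩
    obtain ⟨h, hh, hhj⟩ := hnN
    have hhj' : h j = n := hhj
    obtain ⟨a, ha, t, ht⟩ := decomp _ h hh rfl
    have haN : a j ∈ N := ⟨a, ha.1, rfl⟩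
    rcases Nat.eq_zero_or_pos t with ht0 | ht0
    · subst ht0
      refine ⟨a, ha, ?_⟩
      simp only
      push_cast at ht
      omega
    · exfalso
      apply hnap
      have h1 : (t - 1) • (m : ℤ) ∈ N := N.nsmul_mem hNm _
      have h2 : n - (m : ℤ) = a j + (t - 1) • (m : ℤ) := by
        rw [nsmul_eq_mul]
        have h3 : (((t - 1 : ℕ)) : ℤ) = (t : ℤ) - 1 := by omega
        rw [h3]
        rw [← hhj']
        push_cast at ht ⊢
        linarith
      rw [h2]
      exact N.add_mem haN h1
  have himeq : aperyZ m N = (fun x => x j) '' apery d m H := by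
    apply Set.eq_of_subset_of_ncard_le himsub ?_ (hapfin.image _)
    calc ((fun x => x j) '' apery d m H).ncard ≤ (apery d m H).ncard :=
          Set.ncard_image_le hapfin
      _ = m := hap
      _ = (aperyZ m N).ncard := hApNcard.symm
  -- socle facts
  have husoc : u ∈ soc d m H := by rw [hsoc]; exact Set.mem_insert _ _
  have hvsoc : v ∈ soc d m H := by rw [hsoc]; exact Set.mem_insert_of_mem _ rfl
  have huap : u ∈ apery d m H := husoc.1
  have hvap : v ∈ apery d m H := hvsoc.1
  have hvjAp : v j ∈ aperyZ m N := by rw [himeq]; exact ⟨v, hvap, rfl⟩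
  have hujN : u j ∈ N := ⟨u, huap.1, rfl⟩
  have hsocsub : ∀ n ∈ socZ m N, n = u j ∨ n = v j := by
    rintro n ⟨hnap, hnmax⟩
    have hn' : n ∈ (fun x => x j) '' apery d m H := by rw [← himeq]; exact hnap
    obtain ⟨w, hw, hwj⟩ := hn'
    have hwj' : w j = n := hwj
    by_cases hwu : w = u
    · left; rw [← hwj', hwu]
    · right
      have hvw : v - w ∈ H := hmax w hw hwu
      have hdiff : v j - n ∈ N := ⟨v - w, hvw, by show (v - w) j = v j - n; rw [Pi.sub_apply, hwj']⟩
      exact hnmax (v j) hvjAp hdiff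
  have hApN0 : (0 : ℤ) ∈ aperyZ m N := by
    refine ⟨N.zero_mem, fun hc => ?_⟩
    have := hN0 _ hc
    omega
  have hsocne : (socZ m N).Nonempty := by
    obtain ⟨a, haAp, hamax⟩ := Set.Finite.exists_maximalFor id _ hApNfin ⟨0, hApN0⟩
    refine ⟨a, haAp, fun y hy hyn => (fun h => le_antisymm h (hamax hy h)) ?_⟩
    have := hN0 _ hyn
    show a ≤ y
    omega
  by_cases huvj : u j = v j
  · left
    have hsub : socZ m N ⊆ {v j} := by
      intro n hn
      rcases hsocsub n hn with h | h
      · rw [huvj] at h; exact h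
      · exact h
    have heq : socZ m N = {v j} := (Set.Nonempty.subset_singleton_iff hsocne).mp hsub
    rw [heq]
    exact Set.ncard_singleton _
  · by_cases hus : u j ∈ socZ m N
    · by_cases hvs : v j ∈ socZ m N
      · right
        have hseq : socZ m N = {u j, v j} := by
          apply Set.Subset.antisymm
          · intro n hn
            rcases hsocsub n hn with h | h
            · rw [h]; exact Set.mem_insert _ _
            · rw [h]; exact Set.mem_insert_of_mem _ rfl
          · rintro n hn
            rcases Set.mem_insert_iff.mp hn with rfl | hn'
            · exact hus
            · rw [Set.mem_singleton_iff.mp hn']; exact hvs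
        obtain ⟨i, hi⟩ := hAG
        have hij := congrFun hi j
        simp only [Pi.add_apply] at hij
        by_cases hije : j = i
        · refine ⟨u j, v j, huvj, hseq, ?_⟩
          rw [Pi.single_apply, if_pos hije] at hij
          linarith
        · exfalso
          rw [Pi.single_apply, if_neg hije] at hij
          have hvu : v j - u j ∈ N := by
            have : v j - u j = u j := by linarith
            rw [this]; exact hujN
          exact huvj (hus.2 (v j) hvjAp hvu)
      · left
        have hsub : socZ m N ⊆ {u j} := by
          intro n hn
          rcases hsocsub n hn with h | h
          · exact h
          · exact absurd (h ▸ hn) hvs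
        have heq : socZ m N = {u j} := (Set.Nonempty.subset_singleton_iff hsocne).mp hsub
        rw [heq]
        exact Set.ncard_singleton _
    · left
      have hsub : socZ m N ⊆ {v j} := by
        intro n hn
        rcases hsocsub n hn with h | h
        · exact absurd (h ▸ hn) hus
        · exact h
      have heq : socZ m N = {v j} := (Set.Nonempty.subset_singleton_iff hsocne).mp hsub
      rw [heq]
      exact Set.ncard_singleton _


end AGpaper
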